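/- Let A be a symmetric real matrix of order n decomposed as A = M_1 + ... + M_m, where each M_j is supported on an index set V_j (i.e. all entries of M_j outside V_j × V_j are zero). For each index u, let λ(D_u) be the sum of λ(M_j) over all j such that u ∈ V_j, where λ(M_j) denotes the smallest eigenvalue of the principal submatrix of M_j on V_j. Then the smallest eigenvalue of A is at least min_u λ(D_u). -/

import Mathlib

/-- The smallest eigenvalue of a real symmetric matrix. -/
noncomputable def minEig {n : Type*} [Fintype n] [DecidableEq n] (hn : Nonempty n)
    {A : Matrix n n ℝ} (hA : A.IsHermitian) : ℝ :=
  Finset.univ.inf' (Finset.univ_nonempty_iff.mpr hn) hA.eigenvalues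

open Matrix Finset

/-- Rayleigh lower bound: `minEig * ‖x‖² ≤ xᵀ B x`. -/
lemma minEig_le_rayleigh {p : Type*} [Fintype p] [DecidableEq p] (hp : Nonempty p)
    {B : Matrix p p ℝ} (hB : B.IsHermitian) (x : p → ℝ) :
    minEig hp hB * ∑ i, x i ^ 2 ≤ x ⬝ᵥ (B *ᵥ x) := by
  set c := minEig hp hB with hc
  have hpsd : (B - c • (1 : Matrix p p ℝ)).PosSemidef := by
    have hd : ((Matrix.diagonal (fun i => hB.eigenvalues i - c)
        : Matrix p p ℝ)).PosSemidef := by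
      refine Matrix.PosSemidef.diagonal fun i => ?_
      have : c ≤ hB.eigenvalues i := Finset.inf'_le _ (Finset.mem_univ i)
      simpa using sub_nonneg.mpr this
    have := hd.mul_mul_conjTranspose_same (hB.eigenvectorUnitary : Matrix p p ℝ)
    convert this using 1
    have hs := hB.spectral_theorem
    rw [Unitary.conjStarAlgAut_apply] at hs
    have hu : (hB.eigenvectorUnitary : Matrix p p ℝ) *
        (star (hB.eigenvectorUnitary : Matrix p p ℝ)) = 1 :=
      (Matrix.mem_unitaryGroup_iff).mp hB.eigenvectorUnitary.2
    have hdiag : Matrix.diagonal (fun i => hB.eigenvalues i - c)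
        = Matrix.diagonal (RCLike.ofReal ∘ hB.eigenvalues) - c • (1 : Matrix p p ℝ) := by
      rw [← Matrix.diagonal_one, ← Matrix.diagonal_smul, ← Matrix.diagonal_sub]
      congr 1
      ext i j
      simp [Matrix.diagonal_apply, Matrix.one_apply, mul_ite]
    rw [hdiag, Matrix.mul_sub, Matrix.sub_mul, ← Matrix.star_eq_conjTranspose, ← hs]
    congr 1
    rw [Matrix.mul_smul, Matrix.smul_mul, Matrix.mul_one, hu]
  have h2 := hpsd.dotProduct_mulVec_nonneg x
  have hx : star x = x := by simp
  rw [hx, Matrix.sub_mulVec, dotProduct_sub, Matrix.smul_mulVec,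
    Matrix.one_mulVec, dotProduct_smul] at h2
  have hxx : x ⬝ᵥ x = ∑ i, x i ^ 2 := by
    simp [dotProduct, sq]
  rw [hxx, smul_eq_mul] at h2
  linarith

/-- The minimum eigenvalue is achieved as a Rayleigh quotient of a unit vector. -/
lemma exists_unit_rayleigh {p : Type*} [Fintype p] [DecidableEq p] (hp : Nonempty p)
    {B : Matrix p p ℝ} (hB : B.IsHermitian) :
    ∃ x : p → ℝ, (∑ i, x i ^ 2 = 1) ∧ x ⬝ᵥ (B *ᵥ x) = minEig hp hB := by
  obtain ⟨i, -, hi⟩ := Finset.exists_mem_eq_inf' (Finset.univ_nonempty_iff.mpr hp)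
    hB.eigenvalues
  refine ⟨⇑(hB.eigenvectorBasis i), ?_, ?_⟩
  · have hn : ‖hB.eigenvectorBasis i‖ = 1 := hB.eigenvectorBasis.orthonormal.1 i
    rw [EuclideanSpace.norm_eq] at hn
    have h0 : (0:ℝ) ≤ ∑ j, ‖hB.eigenvectorBasis i j‖ ^ 2 :=
      Finset.sum_nonneg fun _ _ => by positivity
    have := Real.sqrt_eq_one.mp hn
    calc ∑ j, hB.eigenvectorBasis i j ^ 2
        = ∑ j, ‖hB.eigenvectorBasis i j‖ ^ 2 := by
          simp [Real.norm_eq_abs, sq_abs]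
      _ = 1 := this
  · rw [hB.mulVec_eigenvectorBasis, dotProduct_smul]
    have hxx : ⇑(hB.eigenvectorBasis i) ⬝ᵥ ⇑(hB.eigenvectorBasis i)
        = ∑ j, hB.eigenvectorBasis i j ^ 2 := by simp [dotProduct, sq]
    have hn : ‖hB.eigenvectorBasis i‖ = 1 := hB.eigenvectorBasis.orthonormal.1 i
    rw [EuclideanSpace.norm_eq] at hn
    have := Real.sqrt_eq_one.mp hn
    rw [hxx, smul_eq_mul]
    calc hB.eigenvalues i * ∑ j, hB.eigenvectorBasis i j ^ 2
        = hB.eigenvalues i * ∑ j, ‖hB.eigenvectorBasis i j‖ ^ 2 := by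
          simp [Real.norm_eq_abs, sq_abs]
      _ = hB.eigenvalues i := by rw [this, mul_one]
      _ = minEig hp hB := hi.symm

/-- If a real symmetric matrix `A` decomposes as `A = M 1 + ⋯ + M m` with each `M j`
supported on `V j`, then the smallest eigenvalue of `A` is at least the minimum over
vertices `u` of the sum, over those `j` with `u ∈ V j`, of the smallest eigenvalue of
the principal submatrix of `M j` on `V j`. -/
theorem stmt1 {n : Type*} [Fintype n] [DecidableEq n] (hn : Nonempty n) {m : ℕ}
    (A : Matrix n n ℝ) (hA : A.IsHermitian)
    (M : Fin m → Matrix n n ℝ) (hM : ∀ j, (M j).IsHermitian)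
    (V : Fin m → Finset n) (hV : ∀ j, (V j).Nonempty)
    (hrow : ∀ j, ∀ u v, u ∉ V j → M j u v = 0)
    (hcol : ∀ j, ∀ u v, v ∉ V j → M j u v = 0)
    (hsum : A = ∑ j, M j) :
    minEig hn hA ≥
      Finset.univ.inf' (Finset.univ_nonempty_iff.mpr hn) (fun u =>
        ∑ j ∈ Finset.univ.filter (fun j => u ∈ V j),
          minEig (⟨⟨(hV j).choose, (hV j).choose_spec⟩⟩ : Nonempty (V j))
            ((hM j).submatrix (Subtype.val : (V j) → n))) := by
  classical
  set cj : Fin m → ℝ := fun j =>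
    minEig (⟨⟨(hV j).choose, (hV j).choose_spec⟩⟩ : Nonempty (V j))
      ((hM j).submatrix (Subtype.val : (V j) → n)) with hcj
  set rhs : ℝ := Finset.univ.inf' (Finset.univ_nonempty_iff.mpr hn)
    (fun u => ∑ j ∈ Finset.univ.filter (fun j => u ∈ V j), cj j) with hrhs
  obtain ⟨x, hx1, hxA⟩ := exists_unit_rayleigh hn hA
  rw [ge_iff_le, ← hxA]
  -- decompose the quadratic form
  have hdecomp : x ⬝ᵥ (A *ᵥ x) = ∑ j, x ⬝ᵥ (M j *ᵥ x) := by
    rw [hsum]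
    simp only [dotProduct, Matrix.mulVec, Matrix.sum_apply, Finset.sum_mul,
      Finset.mul_sum]
    exact (Finset.sum_congr rfl fun u _ => Finset.sum_comm).trans Finset.sum_comm
  -- each piece restricts to the submatrix
  have claim1 : ∀ j, x ⬝ᵥ (M j *ᵥ x)
      = (fun u : V j => x u) ⬝ᵥ ((M j).submatrix Subtype.val Subtype.val
          *ᵥ fun u : V j => x u) := by
    intro j
    have hinner : ∀ u, ∑ v, M j u v * x v = ∑ v ∈ V j, M j u v * x v := fun u =>
      (Finset.sum_subset (Finset.subset_univ (V j))
        (fun v _ hv => by rw [hcol j u v hv, zero_mul])).symm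
    calc x ⬝ᵥ (M j *ᵥ x) = ∑ u, x u * ∑ v, M j u v * x v := by
          simp [dotProduct, Matrix.mulVec]
      _ = ∑ u ∈ V j, x u * ∑ v, M j u v * x v := by
          refine (Finset.sum_subset (Finset.subset_univ (V j))
            (fun u _ hu => ?_)).symm
          have : ∑ v, M j u v * x v = 0 :=
            Finset.sum_eq_zero fun v _ => by rw [hrow j u v hu, zero_mul]
          rw [this, mul_zero]
      _ = ∑ u ∈ V j, x u * ∑ v ∈ V j, M j u v * x v := by
          exact Finset.sum_congr rfl fun u _ => by rw [hinner]
      _ = ∑ u : V j, x u * ∑ v : V j, M j (u : n) (v : n) * x v := by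
          rw [← Finset.sum_coe_sort (V j)]
          exact Finset.sum_congr rfl fun u _ => by
            rw [← Finset.sum_coe_sort (V j) (fun v => M j (u : n) v * x v)]
      _ = _ := by simp [dotProduct, Matrix.mulVec, Matrix.submatrix_apply]
  -- Rayleigh bound for each piece
  have claim2 : ∀ j, cj j * ∑ u ∈ V j, x u ^ 2 ≤ x ⬝ᵥ (M j *ᵥ x) := by
    intro j
    have := minEig_le_rayleigh
      (⟨⟨(hV j).choose, (hV j).choose_spec⟩⟩ : Nonempty (V j))
      ((hM j).submatrix (Subtype.val : (V j) → n)) (fun u : V j => x u)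
    rw [claim1 j]
    have hsq : ∑ u : V j, x (u : n) ^ 2 = ∑ u ∈ V j, x u ^ 2 :=
      Finset.sum_coe_sort (V j) (fun u => x u ^ 2)
    rw [← hsq]
    exact this
  -- sum up
  have step1 : ∑ j, cj j * ∑ u ∈ V j, x u ^ 2 ≤ x ⬝ᵥ (A *ᵥ x) := by
    rw [hdecomp]
    exact Finset.sum_le_sum fun j _ => claim2 j
  have step2 : ∑ j, cj j * ∑ u ∈ V j, x u ^ 2
      = ∑ u, (∑ j ∈ Finset.univ.filter (fun j => u ∈ V j), cj j) * x u ^ 2 := by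
    have h1 : ∀ j, cj j * ∑ u ∈ V j, x u ^ 2
        = ∑ u, if u ∈ V j then cj j * x u ^ 2 else 0 := by
      intro j
      rw [Finset.mul_sum, Finset.sum_ite_mem, Finset.univ_inter]
    simp only [h1]
    rw [Finset.sum_comm]
    refine Finset.sum_congr rfl fun u _ => ?_
    rw [Finset.sum_mul, ← Finset.sum_filter]
  have step3 : rhs ≤ ∑ u, (∑ j ∈ Finset.univ.filter (fun j => u ∈ V j), cj j) * x u ^ 2 := by
    calc rhs = rhs * ∑ u, x u ^ 2 := by rw [hx1, mul_one]
      _ = ∑ u, rhs * x u ^ 2 := by rw [Finset.mul_sum]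
      _ ≤ _ := by
          refine Finset.sum_le_sum fun u _ => ?_
          exact mul_le_mul_of_nonneg_right
            (Finset.inf'_le _ (Finset.mem_univ u)) (sq_nonneg _)
  calc rhs ≤ ∑ u, (∑ j ∈ Finset.univ.filter (fun j => u ∈ V j), cj j) * x u ^ 2 := step3
    _ = ∑ j, cj j * ∑ u ∈ V j, x u ^ 2 := step2.symm
    _ ≤ x ⬝ᵥ (A *ᵥ x) := step1
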